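/- For all constants k₁ > 0, k₂ > 0, every exponent c with 0 < c ≤ 1, all bandwidths B₁, B₂ > 0 and powers P₁, P₂ ≥ 0, the potential spectral efficiency function F(B, P) = k₁ · B · (1 - exp(-k₂ · (P/B)^c)) is superadditive: F(B₁ + B₂, P₁ + P₂) ≥ F(B₁, P₁) + F(B₂, P₂). Equivalently, if two tenants with the same user density split a total bandwidth B_tot = B₁ + B₂ and total power P_tot = P₁ + P₂, their sum-PSE never exceeds 2 · F(B_tot/2, P_tot/2), the sum-PSE at the equal split. (This is the precise, correctly oriented form of the comparison in Lemma 2 of the paper.) -/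

import Mathlib

open Real Set

lemma exp_aux_concave (k₂ : ℝ) :
    ConcaveOn ℝ univ (fun y : ℝ => 1 - Real.exp (-k₂ * y)) := by
  constructor
  · exact convex_univ
  · intro x _ y _ a b ha hb hab
    have h := convexOn_exp.2 (mem_univ (-k₂ * x)) (mem_univ (-k₂ * y)) ha hb hab
    simp only [smul_eq_mul] at h ⊢
    have he : Real.exp (-k₂ * (a * x + b * y)) = Real.exp (a * (-k₂ * x) + b * (-k₂ * y)) := by
      ring_nf
    nlinarith [he]

lemma exp_aux_mono (k₂ : ℝ) (hk₂ : 0 < k₂) {x y : ℝ} (hxy : x ≤ y) :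
    1 - Real.exp (-k₂ * x) ≤ 1 - Real.exp (-k₂ * y) := by
  have : Real.exp (-k₂ * y) ≤ Real.exp (-k₂ * x) := by
    apply Real.exp_le_exp.2; nlinarith
  linarith

lemma g_concave (k₂ c : ℝ) (hk₂ : 0 < k₂) (hc0 : 0 < c) (hc1 : c ≤ 1) :
    ConcaveOn ℝ (Ici 0) (fun x : ℝ => 1 - Real.exp (-k₂ * x ^ c)) := by
  constructor
  · exact convex_Ici 0
  · intro x hx y hy a b ha hb hab
    have hf := (Real.concaveOn_rpow hc0.le hc1).2 hx hy ha hb hab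
    simp only [smul_eq_mul] at hf ⊢
    have step1 : 1 - Real.exp (-k₂ * (a * (x ^ c) + b * (y ^ c))) ≤
        1 - Real.exp (-k₂ * (a * x + b * y) ^ c) := exp_aux_mono k₂ hk₂ hf
    have step2 := (exp_aux_concave k₂).2 (mem_univ (x ^ c)) (mem_univ (y ^ c)) ha hb hab
    simp only [smul_eq_mul] at step2
    linarith

theorem PSE_superadditive (k₁ k₂ c : ℝ) (hk₁ : 0 < k₁) (hk₂ : 0 < k₂)
    (hc0 : 0 < c) (hc1 : c ≤ 1) (B₁ B₂ P₁ P₂ : ℝ)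
    (hB₁ : 0 < B₁) (hB₂ : 0 < B₂) (hP₁ : 0 ≤ P₁) (hP₂ : 0 ≤ P₂) :
    k₁ * (B₁ + B₂) * (1 - Real.exp (-k₂ * ((P₁ + P₂) / (B₁ + B₂)) ^ c)) ≥
      k₁ * B₁ * (1 - Real.exp (-k₂ * (P₁ / B₁) ^ c)) +
      k₁ * B₂ * (1 - Real.exp (-k₂ * (P₂ / B₂) ^ c)) := by
  have hS : 0 < B₁ + B₂ := by linarith
  have ha : 0 < B₁ / (B₁ + B₂) := div_pos hB₁ hS
  have hb : 0 < B₂ / (B₁ + B₂) := div_pos hB₂ hS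
  have hab : B₁ / (B₁ + B₂) + B₂ / (B₁ + B₂) = 1 := by field_simp
  have hx : (0:ℝ) ≤ P₁ / B₁ := div_nonneg hP₁ hB₁.le
  have hy : (0:ℝ) ≤ P₂ / B₂ := div_nonneg hP₂ hB₂.le
  have key := (g_concave k₂ c hk₂ hc0 hc1).2 hx hy ha.le hb.le hab
  simp only [smul_eq_mul] at key
  have hcomb : B₁ / (B₁ + B₂) * (P₁ / B₁) + B₂ / (B₁ + B₂) * (P₂ / B₂)
      = (P₁ + P₂) / (B₁ + B₂) := by field_simp
  rw [hcomb] at key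
  have hmul := mul_le_mul_of_nonneg_left key hS.le
  have ea : (B₁ + B₂) * (B₁ / (B₁ + B₂)) = B₁ := by field_simp
  have eb : (B₁ + B₂) * (B₂ / (B₁ + B₂)) = B₂ := by field_simp
  have h2 : (B₁ + B₂) * (1 - Real.exp (-k₂ * ((P₁ + P₂) / (B₁ + B₂)) ^ c)) ≥
      B₁ * (1 - Real.exp (-k₂ * (P₁ / B₁) ^ c)) + B₂ * (1 - Real.exp (-k₂ * (P₂ / B₂) ^ c)) := by
    rw [mul_add, ← mul_assoc, ← mul_assoc, ea, eb] at hmul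
    linarith
  nlinarith [h2, hk₁.le]
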